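/- Let λ = (λ₁ ≥ ... ≥ λ_d ≥ 0) be a partition appearing (i.e., with nonzero multiplicity under the Littlewood–Richardson rule) in the decomposition of S_{(4,3,2,...,2,1)}V ⊗ (S_{(3,1,...,1,0)}V)^{⊗(r−2)} for dim V = d and r ≥ 2. Then for every k with 0 ≤ k ≤ d−1, λ_{d−k} + λ_{d−k+1} + ... + λ_d ≥ rk + 1. -/

import Mathlib

open Finset MvPolynomial

/-- The alternant a_α = Σ_{σ ∈ S_d} sgn(σ) Π_i x_{σ(i)}^{α_i}. -/
noncomputable def alternant (d : ℕ) (α : Fin d → ℕ) : MvPolynomial (Fin d) ℚ :=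
  ∑ σ : Equiv.Perm (Fin d),
    (Equiv.Perm.sign σ : ℤ) • ∏ i : Fin d, X (σ i) ^ α i

/-- The Schur polynomial s_λ in d variables, via the bialternant formula
s_λ = a_{λ+δ}/a_δ with δ = (d−1, d−2, ..., 1, 0), viewed in the fraction
field.  The Schur polynomials are the characters of the Schur modules S_λ V,
so nonzero multiplicity of S_λ V in a tensor product is detected by its
coefficient in the Schur expansion of the product of Schur polynomials. -/
noncomputable def schurPoly (d : ℕ) (l : Fin d → ℕ) :
    FractionRing (MvPolynomial (Fin d) ℚ) :=
  algebraMap (MvPolynomial (Fin d) ℚ) _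
      (alternant d (fun i => l i + (d - 1 - i.val))) /
    algebraMap (MvPolynomial (Fin d) ℚ) _
      (alternant d (fun i => d - 1 - i.val))

/-- The partition (4,3,2,...,2,1) of 2d+2 (d parts, 0-based indices). -/
def partFourThreeTwos (d : ℕ) : Fin d → ℕ :=
  fun i => if i.val = 0 then 4 else if i.val = 1 then 3
    else if i.val = d - 1 then 1 else 2

/-- The partition (3,1,1,...,1,0) of d+1 (d parts, 0-based indices). -/
def partThreeOnes (d : ℕ) : Fin d → ℕ :=
  fun i => if i.val = 0 then 3 else if i.val = d - 1 then 0 else 1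

namespace TS

noncomputable def toF {d : ℕ} (f : Fin d → ℕ) : Fin d →₀ ℕ :=
  Finsupp.equivFunOnFinite.symm f

@[simp] lemma toF_apply {d : ℕ} (f : Fin d → ℕ) (i : Fin d) : toF f i = f i := rfl

@[simp] lemma coe_toF {d : ℕ} (f : Fin d → ℕ) : ⇑(toF f) = f := rfl

lemma toF_inj {d : ℕ} {f g : Fin d → ℕ} (h : toF f = toF g) : f = g :=
  Finsupp.equivFunOnFinite.symm.injective h

def tst (d t : ℕ) : Finset (Fin d) := Finset.univ.filter fun i => t ≤ i.val

def Wc (d t : ℕ) (f : Fin d → ℕ) : ℕ := ∑ i ∈ tst d t, f i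

def Oc (d : ℕ) (f : Fin d → ℕ) : ℕ := ∑ t ∈ Finset.range d, Wc d t f

lemma Wc_add (d t : ℕ) (f g : Fin d → ℕ) :
    Wc d t (fun i => f i + g i) = Wc d t f + Wc d t g := by
  simp [Wc, Finset.sum_add_distrib]

lemma Oc_add (d : ℕ) (f g : Fin d → ℕ) :
    Oc d (fun i => f i + g i) = Oc d f + Oc d g := by
  simp [Oc, Wc_add, Finset.sum_add_distrib]

lemma tst_empty (d t : ℕ) (h : d ≤ t) : tst d t = ∅ := by
  ext i
  simp only [tst, Finset.mem_filter, Finset.mem_univ, true_and, Finset.notMem_empty, iff_false]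
  omega

lemma card_tst (d t : ℕ) (h : t ≤ d) : (tst d t).card = d - t := by
  have : (tst d t).card = ∑ i : Fin d, if t ≤ i.val then 1 else 0 := by
    rw [tst, Finset.card_filter]
  rw [this, Fin.sum_univ_eq_sum_range (fun i => if t ≤ i then 1 else 0)]
  have : ∑ i ∈ Finset.range d, (if t ≤ i then 1 else 0) =
      ((Finset.range d).filter (fun i => t ≤ i)).card := by
    rw [Finset.card_filter]
  rw [this]
  have : (Finset.range d).filter (fun i => t ≤ i) = Finset.Ico t d := by
    ext i
    simp only [Finset.mem_filter, Finset.mem_range, Finset.mem_Ico]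
    omega
  rw [this, Nat.card_Ico]

-- layer cake
lemma layer (c B : ℕ) (h : c ≤ B) :
    c = ∑ m ∈ Finset.range B, if m < c then 1 else 0 := by
  rw [← Finset.card_filter]
  have : (Finset.range B).filter (fun m => m < c) = Finset.range c := by
    ext m
    simp only [Finset.mem_filter, Finset.mem_range]
    omega
  simp [this]

-- per-level cardinality claim
lemma level_card {d t m : ℕ} (α : Fin d → ℕ) (hα : Antitone α) (σ : Equiv.Perm (Fin d)) :
    ((tst d t).filter (fun i => m < α i)).card ≤
      ((tst d t).filter (fun i => m < α (σ i))).card := by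
  classical
  set Q := (tst d t).filter (fun i => m < α i) with hQ
  set P := (tst d t).filter (fun i => m < α (σ i)) with hP
  rcases Q.eq_empty_or_nonempty with hQe | ⟨j₀, hj₀⟩
  · simp [hQe]
  have hj₀' : t ≤ j₀.val ∧ m < α j₀ := by
    have := hj₀
    rw [hQ, Finset.mem_filter] at this
    refine ⟨?_, this.2⟩
    have := this.1
    rw [tst, Finset.mem_filter] at this
    exact this.2
  have htd : t < d := lt_of_le_of_lt hj₀'.1 j₀.isLt
  set L := Finset.univ.filter (fun j : Fin d => m < α j) with hL
  set L' := Finset.univ.filter (fun j : Fin d => m < α (σ j)) with hL'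
  have hLL' : L'.card = L.card := by
    apply Finset.card_bij (fun j _ => σ j)
    · intro a ha
      rw [hL', Finset.mem_filter] at ha
      rw [hL, Finset.mem_filter]
      exact ⟨Finset.mem_univ _, ha.2⟩
    · intro a _ b _ hab
      exact σ.injective hab
    · intro b hb
      refine ⟨σ.symm b, ?_, by simp⟩
      rw [hL', Finset.mem_filter]
      rw [hL, Finset.mem_filter] at hb
      simpa using hb.2
  set bot := Finset.univ.filter (fun j : Fin d => j.val < t) with hbot
  have hbotcard : bot.card + (tst d t).card = d := by
    have hfc := Finset.card_filter_add_card_filter_not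
      (s := (Finset.univ : Finset (Fin d))) (p := fun j : Fin d => j.val < t)
    simp only [Finset.card_univ, Fintype.card_fin] at hfc
    have htt : tst d t = Finset.univ.filter (fun j : Fin d => ¬ j.val < t) := by
      ext j
      simp only [tst, Finset.mem_filter, Finset.mem_univ, true_and]
      omega
    rw [hbot, htt]
    exact hfc
  have hbotL : bot ⊆ L := by
    intro j hj
    rw [hbot, Finset.mem_filter] at hj
    rw [hL, Finset.mem_filter]
    refine ⟨Finset.mem_univ _, ?_⟩
    have hle : j ≤ j₀ := by
      rw [Fin.le_def]; omega
    exact lt_of_lt_of_le hj₀'.2 (hα hle)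
  have hQL : Q ⊆ L := by
    intro j hj
    rw [hQ, Finset.mem_filter] at hj
    rw [hL, Finset.mem_filter]
    exact ⟨Finset.mem_univ _, hj.2⟩
  have hdisj : Disjoint bot Q := by
    rw [Finset.disjoint_left]
    intro j hj hj2
    rw [hbot, Finset.mem_filter] at hj
    rw [hQ, Finset.mem_filter, tst, Finset.mem_filter] at hj2
    omega
  have hunion : bot.card + Q.card ≤ L.card := by
    rw [← Finset.card_union_of_disjoint hdisj]
    exact Finset.card_le_card (Finset.union_subset hbotL hQL)
  have hinter : (tst d t).card + L'.card ≤ d + P.card := by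
    have h1 := Finset.card_union_add_card_inter (tst d t) L'
    have h2 : ((tst d t) ∪ L').card ≤ d := by
      have := Finset.card_le_univ ((tst d t) ∪ L')
      simpa using this
    have h3 : (tst d t) ∩ L' = P := by
      ext j
      rw [hP, Finset.mem_inter, hL', Finset.mem_filter, Finset.mem_filter]
      simp only [Finset.mem_univ, true_and]
    rw [h3] at h1
    omega
  clear_value Q P L L' bot
  omega

-- Lemma A : rearrangement-type bound for tail sums
lemma W_perm {d t : ℕ} (α : Fin d → ℕ) (hα : Antitone α) (σ : Equiv.Perm (Fin d)) :
    Wc d t α ≤ Wc d t (fun i => α (σ i)) := by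
  classical
  set B := (∑ i : Fin d, α i) + 1 with hB
  have hBle : ∀ j : Fin d, α j ≤ B := by
    intro j
    have : α j ≤ ∑ i : Fin d, α i :=
      Finset.single_le_sum (fun i _ => Nat.zero_le _) (Finset.mem_univ j)
    omega
  have expand : ∀ g : Fin d → ℕ, (∀ j, g j ≤ B) →
      Wc d t g = ∑ m ∈ Finset.range B, ((tst d t).filter (fun i => m < g i)).card := by
    intro g hg
    rw [Wc]
    calc ∑ i ∈ tst d t, g i
        = ∑ i ∈ tst d t, ∑ m ∈ Finset.range B, (if m < g i then 1 else 0) := by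
          apply Finset.sum_congr rfl
          intro i _
          exact layer (g i) B (hg i)
      _ = ∑ m ∈ Finset.range B, ∑ i ∈ tst d t, (if m < g i then 1 else 0) :=
          Finset.sum_comm
      _ = ∑ m ∈ Finset.range B, ((tst d t).filter (fun i => m < g i)).card := by
          apply Finset.sum_congr rfl
          intro m _
          rw [Finset.card_filter]
  rw [expand α hBle, expand (fun i => α (σ i)) (fun j => hBle (σ j))]
  exact Finset.sum_le_sum (fun m _ => level_card α hα σ)

-- extraction: equality of all tail sums forces equality of functions
lemma W_eq_extract {d : ℕ} (α β : Fin d → ℕ)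
    (h : ∀ t, Wc d t α = Wc d t β) : α = β := by
  have key : ∀ i : Fin d, Wc d i.val α = α i + Wc d (i.val + 1) α ∧
      Wc d i.val β = β i + Wc d (i.val + 1) β := by
    intro i
    have hins : tst d i.val = insert i (tst d (i.val + 1)) := by
      ext j
      simp only [tst, Finset.mem_filter, Finset.mem_univ, true_and, Finset.mem_insert]
      constructor
      · intro hj
        rcases Nat.eq_or_lt_of_le hj with hj' | hj'
        · left; exact Fin.ext hj'.symm
        · right; omega
      · rintro (rfl | hj) <;> omega
    have hnot : i ∉ tst d (i.val + 1) := by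
      simp [tst]
    constructor <;> (rw [Wc, hins, Finset.sum_insert hnot]; rfl)
  funext i
  have h1 := (key i).1
  have h2 := (key i).2
  have h3 := h i.val
  have h4 := h (i.val + 1)
  omega

-- alternant as a sum of monomials
lemma prod_X_pow_eq (d : ℕ) (g : Fin d → ℕ) :
    (∏ i : Fin d, (X i : MvPolynomial (Fin d) ℚ) ^ g i) = monomial (toF g) 1 := by
  rw [monomial_eq, C_1, one_mul]
  rw [Finsupp.prod_fintype _ _ (fun i => pow_zero _)]
  rfl

lemma alternant_eq (d : ℕ) (α : Fin d → ℕ) :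
    alternant d α = ∑ σ : Equiv.Perm (Fin d),
      (Equiv.Perm.sign σ : ℤ) • monomial (toF (fun j => α (σ.symm j))) (1 : ℚ) := by
  rw [alternant]
  apply Finset.sum_congr rfl
  intro σ _
  congr 1
  rw [← prod_X_pow_eq d (fun j => α (σ.symm j))]
  exact Fintype.prod_equiv σ (fun i => (X (σ i) : MvPolynomial (Fin d) ℚ) ^ α i)
    (fun j => (X j : MvPolynomial (Fin d) ℚ) ^ α (σ.symm j))
    (fun i => by rw [Equiv.symm_apply_apply])

lemma mem_support_alternant {d : ℕ} {α : Fin d → ℕ} {e : Fin d →₀ ℕ}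
    (he : e ∈ (alternant d α).support) :
    ∃ σ : Equiv.Perm (Fin d), toF (fun j => α (σ.symm j)) = e := by
  classical
  rw [alternant_eq] at he
  have h1 := MvPolynomial.support_sum he
  rw [Finset.mem_biUnion] at h1
  obtain ⟨σ, _, hσ⟩ := h1
  have h2 := MvPolynomial.support_smul hσ
  rw [support_monomial] at h2
  simp only [one_ne_zero, if_false, Finset.mem_singleton] at h2
  exact ⟨σ, h2.symm⟩

lemma coeff_alternant_lead {d : ℕ} {α : Fin d → ℕ} (hα : Function.Injective α) :
    coeff (toF α) (alternant d α) = 1 := by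
  classical
  rw [alternant_eq, coeff_sum]
  rw [Finset.sum_eq_single (1 : Equiv.Perm (Fin d))]
  · simp [coeff_smul, coeff_monomial]; rfl
  · intro σ _ hσ
    rw [coeff_smul, coeff_monomial]
    rw [if_neg, smul_zero]
    intro hc
    apply hσ
    have hfun : (fun j => α (σ.symm j)) = α := toF_inj hc
    apply Equiv.ext
    intro j
    have h6 : σ.symm j = j := hα (congrFun hfun j)
    simp only [Equiv.Perm.coe_one, id_eq]
    conv_lhs => rw [← h6]
    exact σ.apply_symm_apply j
  · intro h
    exact absurd (Finset.mem_univ _) h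

lemma coe_finsupp_add {d : ℕ} (a b : Fin d →₀ ℕ) :
    (⇑(a + b) : Fin d → ℕ) = fun i => a i + b i := by
  ext i; simp

-- lower bound property for tail sums over supports
def LBp (d : ℕ) (v : ℕ → ℕ) (p : MvPolynomial (Fin d) ℚ) : Prop :=
  ∀ e ∈ p.support, ∀ t, v t ≤ Wc d t ⇑e

lemma LBp_alternant {d : ℕ} {α : Fin d → ℕ} (hα : Antitone α) :
    LBp d (fun t => Wc d t α) (alternant d α) := by
  intro e he t
  obtain ⟨σ, rfl⟩ := mem_support_alternant he
  rw [coe_toF]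
  exact W_perm α hα σ.symm

lemma LBp_mul {d : ℕ} {v w : ℕ → ℕ} {p q : MvPolynomial (Fin d) ℚ}
    (hp : LBp d v p) (hq : LBp d w q) : LBp d (fun t => v t + w t) (p * q) := by
  classical
  intro e he t
  have hm := MvPolynomial.support_mul p q he
  rw [Finset.mem_add] at hm
  obtain ⟨a, ha, b, hb, rfl⟩ := hm
  rw [coe_finsupp_add, Wc_add]
  exact Nat.add_le_add (hp a ha t) (hq b hb t)

lemma LBp_one (d : ℕ) : LBp d (fun _ => 0) (1 : MvPolynomial (Fin d) ℚ) :=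
  fun _ _ _ => Nat.zero_le _

lemma LBp_pow {d : ℕ} {w : ℕ → ℕ} {q : MvPolynomial (Fin d) ℚ}
    (hq : LBp d w q) (n : ℕ) : LBp d (fun t => n * w t) (q ^ n) := by
  induction n with
  | zero => simpa using LBp_one d
  | succ n ih =>
      have := LBp_mul ih hq
      rw [pow_succ]
      intro e he t
      have h2 : n * w t + w t ≤ Wc d t ⇑e := this e he t
      show (n + 1) * w t ≤ Wc d t ⇑e
      have h3 : (n + 1) * w t = n * w t + w t := by ring
      omega

-- leading-term property w.r.t. the increasing weight Oc
def Lead (d : ℕ) (a : ℕ) (u : Fin d →₀ ℕ) (p : MvPolynomial (Fin d) ℚ) : Prop :=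
  coeff u p = 1 ∧ Oc d ⇑u = a ∧
    ∀ e ∈ p.support, a ≤ Oc d ⇑e ∧ (Oc d ⇑e = a → e = u)

lemma Lead_alternant {d : ℕ} {α : Fin d → ℕ} (hs : StrictAnti α) :
    Lead d (Oc d α) (toF α) (alternant d α) := by
  refine ⟨coeff_alternant_lead hs.injective, by rw [coe_toF], ?_⟩
  intro e he
  obtain ⟨σ, rfl⟩ := mem_support_alternant he
  rw [coe_toF]
  have hle : ∀ t ∈ Finset.range d, Wc d t α ≤ Wc d t (fun j => α (σ.symm j)) :=
    fun t _ => W_perm α hs.antitone σ.symm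
  constructor
  · exact Finset.sum_le_sum hle
  · intro heq
    have hall : ∀ t ∈ Finset.range d, Wc d t α = Wc d t (fun j => α (σ.symm j)) := by
      intro t ht
      by_contra hne
      have hlt : Wc d t α < Wc d t (fun j => α (σ.symm j)) :=
        lt_of_le_of_ne (hle t ht) hne
      have : Oc d α < Oc d (fun j => α (σ.symm j)) :=
        Finset.sum_lt_sum hle ⟨t, ht, hlt⟩
      omega
    have : (fun j => α (σ.symm j)) = α := by
      apply W_eq_extract
      intro t
      by_cases htd : t < d
      · exact (hall t (Finset.mem_range.mpr htd)).symm
      · rw [Wc, Wc, tst_empty d t (by omega)]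
        simp
    rw [this]

lemma Lead_mul {d : ℕ} {a b : ℕ} {u v : Fin d →₀ ℕ} {p q : MvPolynomial (Fin d) ℚ}
    (hp : Lead d a u p) (hq : Lead d b v q) : Lead d (a + b) (u + v) (p * q) := by
  classical
  obtain ⟨hp1, hp2, hp3⟩ := hp
  obtain ⟨hq1, hq2, hq3⟩ := hq
  have hOadd : ∀ x y : Fin d →₀ ℕ, Oc d ⇑(x + y) = Oc d ⇑x + Oc d ⇑y := by
    intro x y
    rw [coe_finsupp_add, Oc_add]
  have hsup : ∀ e ∈ (p * q).support, a + b ≤ Oc d ⇑e ∧ (Oc d ⇑e = a + b → e = u + v) := by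
    intro e he
    have hm := MvPolynomial.support_mul p q he
    rw [Finset.mem_add] at hm
    obtain ⟨x, hx, y, hy, rfl⟩ := hm
    have h1 := hp3 x hx
    have h2 := hq3 y hy
    rw [hOadd x y]
    constructor
    · omega
    · intro heq
      have hxu : x = u := h1.2 (by omega)
      have hyv : y = v := h2.2 (by omega)
      rw [hxu, hyv]
  refine ⟨?_, by rw [hOadd, hp2, hq2], hsup⟩
  rw [coeff_mul]
  rw [Finset.sum_eq_single_of_mem (u, v) (Finset.HasAntidiagonal.mem_antidiagonal.mpr rfl)]
  · rw [hp1, hq1, one_mul]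
  · rintro ⟨x, y⟩ hxy hne
    have hsum : x + y = u + v := Finset.HasAntidiagonal.mem_antidiagonal.mp hxy
    by_contra h0
    have hx0 : coeff x p ≠ 0 := fun h => h0 (by simp [h])
    have hy0 : coeff y q ≠ 0 := fun h => h0 (by simp [h])
    have hx := hp3 x (MvPolynomial.mem_support_iff.mpr hx0)
    have hy := hq3 y (MvPolynomial.mem_support_iff.mpr hy0)
    have hOc : Oc d ⇑x + Oc d ⇑y = a + b := by
      rw [← hOadd, hsum, hOadd, hp2, hq2]
    have hxu : x = u := hx.2 (by omega)
    have hyv : y = v := hy.2 (by omega)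
    exact hne (by rw [hxu, hyv])

lemma Lead_one (d : ℕ) : Lead d 0 0 (1 : MvPolynomial (Fin d) ℚ) := by
  classical
  refine ⟨by simp, by simp [Oc, Wc], ?_⟩
  intro e he
  have : coeff e (1 : MvPolynomial (Fin d) ℚ) ≠ 0 := MvPolynomial.mem_support_iff.mp he
  rw [coeff_one] at this
  have he0 : e = 0 := by
    by_contra hne
    simp [Ne.symm hne] at this
  subst he0
  simp [Oc, Wc]

lemma Lead_pow {d : ℕ} {a : ℕ} {u : Fin d →₀ ℕ} {p : MvPolynomial (Fin d) ℚ}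
    (hp : Lead d a u p) (n : ℕ) : Lead d (n * a) (n • u) (p ^ n) := by
  induction n with
  | zero => simpa using Lead_one d
  | succ n ih =>
      have := Lead_mul ih hp
      rw [pow_succ]
      have h1 : (n + 1) * a = n * a + a := by ring
      have h2 : (n + 1) • u = n • u + u := succ_nsmul u n
      rw [h1, h2]
      exact this

lemma Wc_smul (d t m : ℕ) (f : Fin d → ℕ) :
    Wc d t (fun i => m * f i) = m * Wc d t f := by
  simp [Wc, Finset.mul_sum]

lemma Oc_smul (d m : ℕ) (f : Fin d → ℕ) :
    Oc d (fun i => m * f i) = m * Oc d f := by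
  simp [Oc, Wc_smul, Finset.mul_sum]

lemma strictAnti_delta (d : ℕ) : StrictAnti (fun i : Fin d => d - 1 - i.val) := by
  intro i j hij
  have h1 : i.val < j.val := hij
  have h2 := j.isLt
  simp only []
  omega

lemma strictAnti_add_delta {d : ℕ} {f : Fin d → ℕ} (hf : Antitone f) :
    StrictAnti (fun i : Fin d => f i + (d - 1 - i.val)) := by
  intro i j hij
  have h1 : f j ≤ f i := hf hij.le
  have h2 : i.val < j.val := hij
  have h3 := j.isLt
  simp only []
  omega

lemma antitone_mu {d : ℕ} (hd : 3 ≤ d) : Antitone (partFourThreeTwos d) := by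
  intro i j hij
  have h1 : i.val ≤ j.val := hij
  have h2 := j.isLt
  have h3 := i.isLt
  simp only [partFourThreeTwos]
  split_ifs <;> omega

lemma antitone_nu {d : ℕ} (hd : 3 ≤ d) : Antitone (partThreeOnes d) := by
  intro i j hij
  have h1 : i.val ≤ j.val := hij
  have h2 := j.isLt
  have h3 := i.isLt
  simp only [partThreeOnes]
  split_ifs <;> omega

lemma sum_ind_last {d t : ℕ} (hd : 1 ≤ d) (ht : t ≤ d - 1) :
    ∑ i ∈ tst d t, (if i.val = d - 1 then (1 : ℕ) else 0) = 1 := by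
  classical
  have hlast : (⟨d - 1, by omega⟩ : Fin d) ∈ tst d t := by
    simp [tst]; omega
  have : ∀ i ∈ tst d t, (if i.val = d - 1 then (1 : ℕ) else 0) =
      (if i = (⟨d - 1, by omega⟩ : Fin d) then (1 : ℕ) else 0) := by
    intro i _
    congr 1
    simp [Fin.ext_iff]
  rw [Finset.sum_congr rfl this, Finset.sum_ite_eq' (tst d t)]
  simp [hlast]

lemma mu_tail {d k : ℕ} (hd : 3 ≤ d) (hk : k ≤ d - 1) :
    2 * k + 1 ≤ Wc d (d - 1 - k) (partFourThreeTwos d) := by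
  classical
  set t := d - 1 - k with ht
  have hcard : (tst d t).card = k + 1 := by
    rw [card_tst d t (by omega)]; omega
  have hbound : ∀ i ∈ tst d t,
      (if i.val = d - 1 then (1 : ℕ) else 2) ≤ partFourThreeTwos d i := by
    intro i _
    have h2 := i.isLt
    simp only [partFourThreeTwos]
    split_ifs <;> omega
  have hsum : ∑ i ∈ tst d t, (if i.val = d - 1 then (1 : ℕ) else 2) = 2 * k + 1 := by
    have hsplit : ∀ i ∈ tst d t, (if i.val = d - 1 then (1 : ℕ) else 2) +
        (if i.val = d - 1 then (1 : ℕ) else 0) = 2 := by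
      intro i _; split_ifs <;> rfl
    have h1 : ∑ i ∈ tst d t, ((if i.val = d - 1 then (1 : ℕ) else 2) +
        (if i.val = d - 1 then (1 : ℕ) else 0)) = 2 * (k + 1) := by
      rw [Finset.sum_congr rfl hsplit]
      rw [Finset.sum_const, hcard]
      simp [Nat.mul_comm]
    rw [Finset.sum_add_distrib, sum_ind_last (by omega) (by omega)] at h1
    omega
  calc 2 * k + 1 = ∑ i ∈ tst d t, (if i.val = d - 1 then (1 : ℕ) else 2) := hsum.symm
    _ ≤ Wc d t (partFourThreeTwos d) := Finset.sum_le_sum hbound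

lemma nu_tail {d k : ℕ} (hd : 3 ≤ d) (hk : k ≤ d - 1) :
    k ≤ Wc d (d - 1 - k) (partThreeOnes d) := by
  classical
  set t := d - 1 - k with ht
  have hcard : (tst d t).card = k + 1 := by
    rw [card_tst d t (by omega)]; omega
  have hbound : ∀ i ∈ tst d t,
      (if i.val = d - 1 then (0 : ℕ) else 1) ≤ partThreeOnes d i := by
    intro i _
    have h2 := i.isLt
    simp only [partThreeOnes]
    split_ifs <;> omega
  have hsum : ∑ i ∈ tst d t, (if i.val = d - 1 then (0 : ℕ) else 1) = k := by
    have hsplit : ∀ i ∈ tst d t, (if i.val = d - 1 then (0 : ℕ) else 1) +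
        (if i.val = d - 1 then (1 : ℕ) else 0) = 1 := by
      intro i _; split_ifs <;> rfl
    have h1 : ∑ i ∈ tst d t, ((if i.val = d - 1 then (0 : ℕ) else 1) +
        (if i.val = d - 1 then (1 : ℕ) else 0)) = k + 1 := by
      rw [Finset.sum_congr rfl hsplit]
      rw [Finset.sum_const, hcard]
      simp
    rw [Finset.sum_add_distrib, sum_ind_last (by omega) (by omega)] at h1
    omega
  calc k = ∑ i ∈ tst d t, (if i.val = d - 1 then (0 : ℕ) else 1) := hsum.symm
    _ ≤ Wc d t (partThreeOnes d) := Finset.sum_le_sum hbound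

lemma fld {K : Type*} [Field K] (a b g : K) (hg : g ≠ 0) (n : ℕ) :
    (a / g) * (b / g) ^ n * g ^ (n + 1) = a * b ^ n := by
  have hy : g * g ^ n ≠ 0 := mul_ne_zero hg (pow_ne_zero _ hg)
  rw [div_pow, div_mul_div_comm, pow_succ']
  exact div_mul_cancel₀ _ hy

lemma fld2 {K : Type*} [Field K] (cc a g : K) (hg : g ≠ 0) (n : ℕ) :
    cc * (a / g) * g ^ (n + 1) = cc * (a * g ^ n) := by
  rw [pow_succ']
  field_simp

end TS

open TS

/-- Any partition λ appearing with nonzero multiplicity in the decomposition of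
S_{(4,3,2,...,2,1)}V ⊗ (S_{(3,1,...,1,0)}V)^{⊗(r−2)} satisfies
λ_{d−k} + ... + λ_d ≥ rk + 1 for every 0 ≤ k ≤ d−1.  (Multiplicities are read
off from the Schur-polynomial expansion of the product of characters.) -/
theorem tail_sum_bound (d r : ℕ) (hd : 3 ≤ d) (hr : 2 ≤ r)
    (s : Finset (Fin d → ℕ)) (c : (Fin d → ℕ) → ℕ)
    (hpart : ∀ l ∈ s, Antitone l)
    (hmult : ∀ l ∈ s, c l ≠ 0)
    (hexp : schurPoly d (partFourThreeTwos d) *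
        (schurPoly d (partThreeOnes d)) ^ (r - 2) =
      ∑ l ∈ s, (c l : FractionRing (MvPolynomial (Fin d) ℚ)) * schurPoly d l) :
    ∀ l ∈ s, ∀ k ≤ d - 1,
      r * k + 1 ≤ ∑ i ∈ Finset.univ.filter (fun i : Fin d => d - 1 - k ≤ i.val),
        l i := by

  classical
  intro l hl k hk
  set K := FractionRing (MvPolynomial (Fin d) ℚ)
  set φ := algebraMap (MvPolynomial (Fin d) ℚ) K with hφdef
  have hφinj : Function.Injective φ := IsFractionRing.injective _ _
  set n := r - 2 with hn
  -- the denominator alternant is nonzero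
  have hD0 : alternant d (fun i : Fin d => d - 1 - i.val) ≠ 0 := by
    intro h0
    have h1 := coeff_alternant_lead (d := d) (strictAnti_delta d).injective
    rw [h0] at h1
    simp at h1
  have hDK : φ (alternant d (fun i : Fin d => d - 1 - i.val)) ≠ 0 :=
    (map_ne_zero_iff φ hφinj).mpr hD0
  -- clear denominators: polynomial identity
  have key : alternant d (fun i => partFourThreeTwos d i + (d - 1 - i.val)) *
      (alternant d (fun i => partThreeOnes d i + (d - 1 - i.val))) ^ n =
      ∑ l' ∈ s, ((c l' : MvPolynomial (Fin d) ℚ) *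
        (alternant d (fun i => l' i + (d - 1 - i.val)) *
          (alternant d (fun i : Fin d => d - 1 - i.val)) ^ n)) := by
    apply hφinj
    rw [map_mul, map_pow, map_sum]
    simp only [map_mul, map_pow, map_natCast]
    simp only [schurPoly] at hexp
    have h2 := congrArg (fun x => x * (φ (alternant d (fun i : Fin d => d - 1 - i.val))) ^ (n + 1)) hexp
    beta_reduce at h2
    rw [fld _ _ _ hDK n] at h2
    rw [Finset.sum_mul] at h2
    rw [h2]
    apply Finset.sum_congr rfl
    intro l' _
    rw [mul_assoc]
    rw [← fld2 ((c l' : K)) (φ (alternant d (fun i => l' i + (d - 1 - i.val)))) _ hDK n]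
    ring
  -- choose the minimal element
  obtain ⟨l₁, hl₁, hmin⟩ := Finset.exists_min_image s (fun f => Wc d (d - 1 - k) f) ⟨l, hl⟩
  obtain ⟨l₀, hl₀m, homin⟩ := Finset.exists_min_image
    (s.filter fun f => Wc d (d - 1 - k) f = Wc d (d - 1 - k) l₁) (fun f => Oc d f)
    ⟨l₁, by simp [hl₁]⟩
  rw [Finset.mem_filter] at hl₀m
  obtain ⟨hl₀s, hWl₀⟩ := hl₀m
  -- the distinguished monomial
  set u₀ : Fin d →₀ ℕ := toF (fun i => l₀ i + (d - 1 - i.val)) +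
    n • toF (fun i : Fin d => d - 1 - i.val) with hu₀
  have hcoe_u₀ : ∀ t : ℕ, Wc d t ⇑u₀ = Wc d t (fun i => l₀ i + (d - 1 - i.val)) +
      n * Wc d t (fun i : Fin d => d - 1 - i.val) := by
    intro t
    have h1 : ⇑u₀ = fun i => (l₀ i + (d - 1 - i.val)) + n * (d - 1 - i.val) := by
      funext i
      simp [hu₀, Finsupp.add_apply, Finsupp.smul_apply, smul_eq_mul]
    rw [h1, Wc_add, Wc_smul]
  have hOc_u₀ : Oc d ⇑u₀ = Oc d (fun i => l₀ i + (d - 1 - i.val)) +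
      n * Oc d (fun i : Fin d => d - 1 - i.val) := by
    simp only [Oc, hcoe_u₀, Finset.sum_add_distrib, Finset.mul_sum]
  -- Lead and LB for each RHS term
  have hLead : ∀ l' ∈ s, Lead d
      (Oc d (fun i => l' i + (d - 1 - i.val)) + n * Oc d (fun i : Fin d => d - 1 - i.val))
      ((toF (fun i => l' i + (d - 1 - i.val))) + n • toF (fun i : Fin d => d - 1 - i.val))
      (alternant d (fun i => l' i + (d - 1 - i.val)) *
        (alternant d (fun i : Fin d => d - 1 - i.val)) ^ n) :=
    fun l' hl' => Lead_mul (Lead_alternant (strictAnti_add_delta (hpart l' hl')))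
      (Lead_pow (Lead_alternant (strictAnti_delta d)) n)
  have hLB : ∀ l' ∈ s, LBp d
      (fun t => Wc d t (fun i => l' i + (d - 1 - i.val)) +
        n * Wc d t (fun i : Fin d => d - 1 - i.val))
      (alternant d (fun i => l' i + (d - 1 - i.val)) *
        (alternant d (fun i : Fin d => d - 1 - i.val)) ^ n) :=
    fun l' hl' => LBp_mul (LBp_alternant (strictAnti_add_delta (hpart l' hl')).antitone)
      (LBp_pow (LBp_alternant (strictAnti_delta d).antitone) n)
  -- cross terms vanish
  have hcross : ∀ l' ∈ s, l' ≠ l₀ →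
      coeff u₀ (alternant d (fun i => l' i + (d - 1 - i.val)) *
        (alternant d (fun i : Fin d => d - 1 - i.val)) ^ n) = 0 := by
    intro l' hl' hne
    by_contra h0
    have hsupp : u₀ ∈ (alternant d (fun i => l' i + (d - 1 - i.val)) *
        (alternant d (fun i : Fin d => d - 1 - i.val)) ^ n).support :=
      MvPolynomial.mem_support_iff.mpr h0
    -- W bound at t = d-1-k
    have hW := hLB l' hl' u₀ hsupp (d - 1 - k)
    rw [hcoe_u₀] at hW
    simp only [Wc_add] at hW
    have hWl' : Wc d (d - 1 - k) l' ≤ Wc d (d - 1 - k) l₀ := by omega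
    have hWeq : Wc d (d - 1 - k) l' = Wc d (d - 1 - k) l₁ := by
      have := hmin l' hl'
      omega
    have hOl₀l' : Oc d l₀ ≤ Oc d l' := homin l' (Finset.mem_filter.mpr ⟨hl', hWeq⟩)
    -- O bound
    have hO := (hLead l' hl').2.2 u₀ hsupp
    rw [hOc_u₀] at hO
    have hOadd' : ∀ f : Fin d → ℕ, Oc d (fun i => f i + (d - 1 - (i : Fin d).val)) =
        Oc d f + Oc d (fun i : Fin d => d - 1 - i.val) := fun f => Oc_add d f _
    rw [hOadd' l', hOadd' l₀] at hO
    have hu₀eq : u₀ = toF (fun i => l' i + (d - 1 - i.val)) +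
        n • toF (fun i : Fin d => d - 1 - i.val) := hO.2 (by omega)
    rw [hu₀] at hu₀eq
    have h9 := add_right_cancel hu₀eq
    have h10 := toF_inj h9
    apply hne
    funext i
    have h11 := congrFun h10 i
    beta_reduce at h11
    omega
  -- coefficient of u₀ in the leading term
  have hcmain : coeff u₀ (alternant d (fun i => l₀ i + (d - 1 - i.val)) *
      (alternant d (fun i : Fin d => d - 1 - i.val)) ^ n) = 1 := by
    have h := (hLead l₀ hl₀s).1
    rw [← hu₀] at h
    exact h
  -- coefficient of u₀ on the RHS of key
  have hCnat : ∀ m : ℕ, ((m : ℕ) : MvPolynomial (Fin d) ℚ) = C ((m : ℚ)) :=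
    fun m => (map_natCast (C : ℚ →+* MvPolynomial (Fin d) ℚ) m).symm
  have hRHS : coeff u₀ (∑ l' ∈ s, ((c l' : MvPolynomial (Fin d) ℚ) *
      (alternant d (fun i => l' i + (d - 1 - i.val)) *
        (alternant d (fun i : Fin d => d - 1 - i.val)) ^ n))) = (c l₀ : ℚ) := by
    rw [coeff_sum]
    rw [Finset.sum_eq_single l₀]
    · rw [hCnat, coeff_C_mul, hcmain, mul_one]
    · intro l' hl' hne
      rw [hCnat, coeff_C_mul, hcross l' hl' hne, mul_zero]
    · intro h; exact absurd hl₀s h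
  have hLHS := congrArg (coeff u₀) key
  rw [hRHS] at hLHS
  have hne0 : (c l₀ : ℚ) ≠ 0 := Nat.cast_ne_zero.mpr (hmult l₀ hl₀s)
  have hsuppL : u₀ ∈ (alternant d (fun i => partFourThreeTwos d i + (d - 1 - i.val)) *
      (alternant d (fun i => partThreeOnes d i + (d - 1 - i.val))) ^ n).support :=
    MvPolynomial.mem_support_iff.mpr (by rw [hLHS]; exact hne0)
  have hWL := (LBp_mul (LBp_alternant (strictAnti_add_delta (antitone_mu hd)).antitone)
      (LBp_pow (LBp_alternant (strictAnti_add_delta (antitone_nu hd)).antitone) n))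
    u₀ hsuppL (d - 1 - k)
  rw [hcoe_u₀] at hWL
  simp only [Wc_add] at hWL
  have hdist : n * (Wc d (d - 1 - k) (partThreeOnes d) +
      Wc d (d - 1 - k) (fun i : Fin d => d - 1 - i.val)) =
      n * Wc d (d - 1 - k) (partThreeOnes d) +
      n * Wc d (d - 1 - k) (fun i : Fin d => d - 1 - i.val) := by ring
  have hWl₀bound : Wc d (d - 1 - k) (partFourThreeTwos d) +
      n * Wc d (d - 1 - k) (partThreeOnes d) ≤ Wc d (d - 1 - k) l₀ := by omega
  -- arithmetic
  have hmu := mu_tail (k := k) hd hk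
  have hnu := nu_tail (k := k) hd hk
  have hnnu : n * k ≤ n * Wc d (d - 1 - k) (partThreeOnes d) :=
    Nat.mul_le_mul_left n hnu
  have hrk : r * k = n * k + 2 * k := by
    have hrn : r = n + 2 := by omega
    rw [hrn]; ring
  have hfin : r * k + 1 ≤ Wc d (d - 1 - k) l₀ := by omega
  have hgoal : (∑ i ∈ Finset.univ.filter (fun i : Fin d => d - 1 - k ≤ i.val), l i) =
      Wc d (d - 1 - k) l := rfl
  rw [hgoal]
  have h12 := hmin l hl
  omega
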